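/- (Gauge variational principle.) Let (X,D) be a complete gauge space, where D = (d_i; i ≥ 0) is a sufficient countable family of semimetrics on X, and let Φ = (φ_i; i ≥ 0) be a sequence of functions φ_i : X → ℝ ∪ {+∞} such that: Dom(Φ) := {x : φ_i(x) < +∞ for all i} is nonempty; each φ_i is bounded below (inf φ_i(X) > −∞); and each φ_i is descending D-lsc. Then for each u ∈ Dom(Φ) there exists v ∈ Dom(Φ) such that: (i) d_i(u,v) ≤ φ_i(u) − φ_i(v) for all i ≥ 0; and (ii) for every x ∈ X with x ≠ v there exists an index i with d_i(v,x) + φ_i(x) > φ_i(v) (in the extended reals). -/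

import Mathlib

/-- Gauge variational principle (EVPg): on a complete gauge space `(X, D)` with a sufficient
countable family of semimetrics `D = (d i)`, for any sequence `Φ = (φ i)` of bounded below,
descending `D`-lsc functions with values in `ℝ ∪ {+∞}` and nonempty common domain, each
`u ∈ Dom(Φ)` admits a point `v ∈ Dom(Φ)` with `d i (u, v) ≤ φ i u − φ i v` for all `i`, and
such that every `x ≠ v` satisfies `d i (v, x) + φ i x > φ i v` for some `i`. -/
theorem stmt_14 {X : Type*} (d : ℕ → X → X → ℝ)
    (hd_nonneg : ∀ i x y, 0 ≤ d i x y)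
    (hd_refl : ∀ i x, d i x x = 0)
    (hd_symm : ∀ i x y, d i x y = d i y x)
    (hd_tri : ∀ i x y z, d i x z ≤ d i x y + d i y z)
    (hsuff : ∀ x y, (∀ i, d i x y = 0) → x = y)
    (hcomplete : ∀ x : ℕ → X,
      (∀ i, ∀ ε > (0 : ℝ), ∃ N, ∀ m ≥ N, ∀ n ≥ N, d i (x m) (x n) < ε) →
      ∃ v, ∀ i, Filter.Tendsto (fun n => d i (x n) v) Filter.atTop (nhds 0))
    (φ : ℕ → X → EReal)
    (hne_bot : ∀ i x, φ i x ≠ ⊥)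
    (hdom : ∃ x, ∀ i, φ i x ≠ ⊤)
    (hbdd : ∀ i, ∃ c : ℝ, ∀ x, (c : EReal) ≤ φ i x)
    (hlsc : ∀ i, ∀ x : ℕ → X, ∀ l : X,
      (∀ j, Filter.Tendsto (fun n => d j (x n) l) Filter.atTop (nhds 0)) →
      (∀ n, φ i (x (n + 1)) ≤ φ i (x n)) →
      ∀ n, φ i l ≤ φ i (x n)) :
    ∀ u, (∀ i, φ i u ≠ ⊤) →
      ∃ v, (∀ i, φ i v ≠ ⊤) ∧
        (∀ i, (d i u v : EReal) ≤ φ i u - φ i v) ∧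
        (∀ x, x ≠ v → ∃ i, φ i v < (d i v x : EReal) + φ i x) := by
  classical
  intro u hu
  choose c hc using hbdd
  let Le : X → X → Prop := fun a b => ∀ i, (d i a b : EReal) + φ i b ≤ φ i a
  have hLe_refl : ∀ a, Le a a := by
    intro a i
    rw [hd_refl]
    simp
  have hmono : ∀ a b, Le a b → ∀ i, φ i b ≤ φ i a := by
    intro a b h i
    calc φ i b = (0:EReal) + φ i b := (zero_add _).symm
    _ ≤ (d i a b : EReal) + φ i b :=
        add_le_add_left (by exact_mod_cast hd_nonneg i a b) _
    _ ≤ φ i a := h i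
  have hLe_trans : ∀ a b e, Le a b → Le b e → Le a e := by
    intro a b e h1 h2 i
    have h3 : (d i a e : EReal) + φ i e ≤ (d i a b : EReal) + ((d i b e : EReal) + φ i e) := by
      rw [← add_assoc, ← EReal.coe_add]
      exact add_le_add_left (by exact_mod_cast hd_tri i a b e) _
    exact h3.trans ((add_le_add_right (h2 i) _).trans (h1 i))
  have hstep : ∀ a, (∀ i, φ i a ≠ ⊤) → ∀ j (n : ℕ), ∃ b, Le a b ∧ (∀ i, φ i b ≠ ⊤) ∧
      ∀ z, Le a z → φ j b < φ j z + ((1/((n:ℝ)+1) : ℝ) : EReal) := by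
    intro a ha j n
    have hm_le : sInf ((φ j) '' {z | Le a z}) ≤ φ j a := sInf_le ⟨a, hLe_refl a, rfl⟩
    have hm_ge : (c j : EReal) ≤ sInf ((φ j) '' {z | Le a z}) :=
      le_sInf (by rintro _ ⟨z, hz, rfl⟩; exact hc j z)
    have hm_top : sInf ((φ j) '' {z | Le a z}) ≠ ⊤ := ne_top_of_le_ne_top (ha j) hm_le
    have hm_bot : sInf ((φ j) '' {z | Le a z}) ≠ ⊥ := by
      intro h
      rw [h] at hm_ge
      exact (EReal.coe_ne_bot (c j)) (le_bot_iff.mp hm_ge)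
    have hmr : sInf ((φ j) '' {z | Le a z}) =
        ((sInf ((φ j) '' {z | Le a z})).toReal : EReal) :=
      (EReal.coe_toReal hm_top hm_bot).symm
    have hlt : sInf ((φ j) '' {z | Le a z}) <
        sInf ((φ j) '' {z | Le a z}) + ((1/((n:ℝ)+1):ℝ) : EReal) := by
      conv_lhs => rw [hmr]
      conv_rhs => rw [hmr]
      rw [← EReal.coe_add, EReal.coe_lt_coe_iff]
      have h0 : (0:ℝ) < 1/((n:ℝ)+1) := by positivity
      linarith
    obtain ⟨_, ⟨b, hb, rfl⟩, hblt⟩ := sInf_lt_iff.mp hlt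
    refine ⟨b, hb, fun i => ne_top_of_le_ne_top (ha i) (hmono a b hb i), fun z hz => ?_⟩
    have hmem : φ j z ∈ (φ j) '' {z | Le a z} := ⟨z, hz, rfl⟩
    exact hblt.trans_le (add_le_add_left (sInf_le hmem) _)
  have hstepT : ∀ (n : ℕ) (p : {a : X // ∀ i, φ i a ≠ ⊤}), ∃ q : {a : X // ∀ i, φ i a ≠ ⊤},
      Le p.1 q.1 ∧ ∀ z, Le p.1 z →
        φ (Nat.unpair n).1 q.1 < φ (Nat.unpair n).1 z + ((1/((n:ℝ)+1):ℝ) : EReal) := by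
    intro n p
    obtain ⟨b, h1, h2, h3⟩ := hstep p.1 p.2 (Nat.unpair n).1 n
    exact ⟨⟨b, h2⟩, h1, h3⟩
  choose next hnext1 hnext2 using hstepT
  let sT : ℕ → {a : X // ∀ i, φ i a ≠ ⊤} := fun n => Nat.rec ⟨u, hu⟩ (fun n p => next n p) n
  let s : ℕ → X := fun n => (sT n).1
  have hs0 : s 0 = u := rfl
  have hle_succ : ∀ n, Le (s n) (s (n+1)) := fun n => hnext1 n (sT n)
  have happrox : ∀ n z, Le (s n) z →
      φ (Nat.unpair n).1 (s (n+1)) < φ (Nat.unpair n).1 z + ((1/((n:ℝ)+1):ℝ):EReal) :=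
    fun n => hnext2 n (sT n)
  have hfin : ∀ n i, φ i (s n) ≠ ⊤ := fun n => (sT n).2
  have hchain : ∀ m n, m ≤ n → Le (s m) (s n) := by
    intro m n h
    induction n, h using Nat.le_induction with
    | base => exact hLe_refl _
    | succ n hmn ih => exact hLe_trans _ _ _ ih (hle_succ n)
  let f : ℕ → ℕ → ℝ := fun i n => (φ i (s n)).toReal
  have hφs : ∀ i n, φ i (s n) = ((f i n : ℝ) : EReal) :=
    fun i n => (EReal.coe_toReal (hfin n i) (hne_bot i _)).symm
  have hreal : ∀ i m n, m ≤ n → d i (s m) (s n) + f i n ≤ f i m := by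
    intro i m n h
    have h1 := hchain m n h i
    rw [hφs i m, hφs i n, ← EReal.coe_add, EReal.coe_le_coe_iff] at h1
    exact h1
  have hanti : ∀ i, Antitone (f i) := by
    intro i m n h
    have h1 := hreal i m n h
    have h2 := hd_nonneg i (s m) (s n)
    linarith
  have hbddf : ∀ i, BddBelow (Set.range (f i)) := by
    intro i
    refine ⟨c i, ?_⟩
    rintro _ ⟨n, rfl⟩
    have h1 := hc i (s n)
    rw [hφs i n, EReal.coe_le_coe_iff] at h1
    exact h1
  let L : ℕ → ℝ := fun i => ⨅ n, f i n
  have htend : ∀ i, Filter.Tendsto (f i) Filter.atTop (nhds (L i)) := fun i =>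
    tendsto_atTop_ciInf (hanti i) (hbddf i)
  have hLle : ∀ i n, L i ≤ f i n := fun i n => ciInf_le (hbddf i) n
  have hCauchy : ∀ i, ∀ ε > (0:ℝ), ∃ N, ∀ m ≥ N, ∀ n ≥ N, d i (s m) (s n) < ε := by
    intro i ε hε
    have hev : ∀ᶠ n in Filter.atTop, f i n < L i + ε :=
      (htend i).eventually (eventually_lt_nhds (by linarith : L i < L i + ε))
    obtain ⟨N, hN⟩ := Filter.eventually_atTop.mp hev
    refine ⟨N, fun m hm n hn => ?_⟩
    rcases le_total m n with h | h
    · have h1 := hreal i m n h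
      have h2 := hLle i n
      have h3 : f i m < L i + ε := hN m hm
      linarith
    · have h1 := hreal i n m h
      have h2 := hLle i m
      have h3 : f i n < L i + ε := hN n hn
      rw [hd_symm]
      linarith
  obtain ⟨v, hv⟩ := hcomplete s hCauchy
  have hlscv : ∀ i n, φ i v ≤ φ i (s n) :=
    fun i n => hlsc i s v hv (fun n => hmono _ _ (hle_succ n) i) n
  have hvfin : ∀ i, φ i v ≠ ⊤ := fun i => ne_top_of_le_ne_top (hfin 0 i) (hlscv i 0)
  let g : ℕ → ℝ := fun i => (φ i v).toReal
  have hφv : ∀ i, φ i v = ((g i : ℝ) : EReal) :=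
    fun i => (EReal.coe_toReal (hvfin i) (hne_bot i v)).symm
  have hgL : ∀ i, g i ≤ L i := by
    intro i
    refine le_ciInf fun n => ?_
    have h1 := hlscv i n
    rw [hφv i, hφs i n, EReal.coe_le_coe_iff] at h1
    exact h1
  have hdv : ∀ i n, d i (s n) v ≤ f i n - g i := by
    intro i n
    have key : d i (s n) v ≤ f i n - L i := by
      have hev : ∀ᶠ m in Filter.atTop, d i (s n) v ≤ f i n - f i m + d i (s m) v := by
        filter_upwards [Filter.eventually_ge_atTop n] with m hm
        have h1 := hd_tri i (s n) (s m) v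
        have h2 := hreal i n m hm
        linarith
      have hlim : Filter.Tendsto (fun m => f i n - f i m + d i (s m) v) Filter.atTop
          (nhds (f i n - L i)) := by
        have h1 : Filter.Tendsto (fun m => f i n - f i m) Filter.atTop (nhds (f i n - L i)) :=
          tendsto_const_nhds.sub (htend i)
        have h2 := h1.add (hv i)
        simpa using h2
      exact ge_of_tendsto hlim hev
    have h2 := hgL i
    linarith
  have hLev : ∀ n, Le (s n) v := by
    intro n i
    rw [hφv i, hφs i n, ← EReal.coe_add, EReal.coe_le_coe_iff]
    have h1 := hdv i n
    linarith
  refine ⟨v, hvfin, ?_, ?_⟩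
  · intro i
    show (d i (s 0) v : EReal) ≤ φ i (s 0) - φ i v
    rw [hφs i 0, hφv i, ← EReal.coe_sub, EReal.coe_le_coe_iff]
    exact hdv i 0
  · intro z hzv
    by_contra hcon
    push_neg at hcon
    have hLvz : Le v z := fun i => hcon i
    have hzfin : ∀ i, φ i z ≠ ⊤ := fun i => ne_top_of_le_ne_top (hvfin i) (hmono v z hLvz i)
    have hφz : ∀ i, φ i z = (((φ i z).toReal : ℝ) : EReal) :=
      fun i => (EReal.coe_toReal (hzfin i) (hne_bot i z)).symm
    have hLgz : ∀ i, L i ≤ (φ i z).toReal := by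
      intro i
      refine le_of_forall_pos_le_add fun ε hε => ?_
      obtain ⟨k, hk⟩ := exists_nat_one_div_lt hε
      have hup : (Nat.unpair (Nat.pair i k)).1 = i := by simp
      have hLez : Le (s (Nat.pair i k)) z := hLe_trans _ _ _ (hLev (Nat.pair i k)) hLvz
      have h1 := happrox (Nat.pair i k) z hLez
      rw [hup, hφs i (Nat.pair i k + 1), hφz i, ← EReal.coe_add, EReal.coe_lt_coe_iff] at h1
      have h2 := hLle i (Nat.pair i k + 1)
      have h3 : (1:ℝ)/(((Nat.pair i k):ℝ)+1) ≤ 1/((k:ℝ)+1) := by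
        apply one_div_le_one_div_of_le
        · positivity
        · have h4 := Nat.right_le_pair i k
          have h5 : (k:ℝ) ≤ ((Nat.pair i k):ℝ) := by exact_mod_cast h4
          linarith
      linarith
    have hdz : ∀ i, d i v z = 0 := by
      intro i
      have h1 := hcon i
      rw [hφv i, hφz i, ← EReal.coe_add, EReal.coe_le_coe_iff] at h1
      have h2 := hgL i
      have h3 := hLgz i
      have h4 := hd_nonneg i v z
      linarith
    exact hzv (hsuff z v fun i => by rw [hd_symm]; exact hdz i)
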